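/- Let X be a real random variable with absolutely continuous distribution, 0 ≤ α < β ≤ 1, and θ ∈ ℝ such that Pr(X > θ) ∈ [α, β]. Then Pr(X > θ | F̄(X) ∈ [α, β)) = (Pr(X > θ) − α)/(β − α), where F̄(t) = Pr(X > t). -/

import Mathlib

open MeasureTheory Set Filter Topology

noncomputable def Gf (ν : Measure ℝ) (t : ℝ) : ℝ := (ν (Ioi t)).toReal

section Aux

variable {ν : Measure ℝ} [IsProbabilityMeasure ν]

lemma Gf_anti : Antitone (Gf ν) := fun a b h =>
  ENNReal.toReal_mono (measure_ne_top ν _) (measure_mono (Ioi_subset_Ioi h))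

lemma Gf_nonneg (t : ℝ) : 0 ≤ Gf ν t := ENNReal.toReal_nonneg

lemma Gf_meas : Measurable (Gf ν) := (Gf_anti (ν := ν)).measurable

lemma Gf_tendsto_atTop :
    Tendsto (fun n : ℕ => Gf ν (n : ℝ)) atTop (𝓝 0) := by
  have h1 : Tendsto (fun n : ℕ => ν (Ioi (n : ℝ))) atTop (𝓝 (ν (⋂ n : ℕ, Ioi (n : ℝ)))) := by
    apply tendsto_measure_iInter_atTop
      (fun n => measurableSet_Ioi.nullMeasurableSet)
      (fun n m h => Ioi_subset_Ioi (by exact_mod_cast h)) ⟨0, measure_ne_top _ _⟩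
  have h2 : (⋂ n : ℕ, Ioi (n : ℝ)) = ∅ := by
    ext x; simp only [mem_iInter, mem_Ioi, mem_empty_iff_false, iff_false, not_forall, not_lt]
    obtain ⟨n, hn⟩ := exists_nat_ge x; exact ⟨n, hn⟩
  rw [h2, measure_empty] at h1
  have := (ENNReal.tendsto_toReal (by simp)).comp h1
  simpa [Function.comp_def, Gf] using this

lemma Gf_tendsto_atBot :
    Tendsto (fun n : ℕ => Gf ν (-(n : ℝ))) atTop (𝓝 1) := by
  have h1 : Tendsto (fun n : ℕ => ν (Ioi (-(n : ℝ)))) atTop (𝓝 (ν (⋃ n : ℕ, Ioi (-(n : ℝ))))) := by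
    apply tendsto_measure_iUnion_atTop
    exact fun n m h => Ioi_subset_Ioi (neg_le_neg (Nat.cast_le.mpr h))
  have h2 : (⋃ n : ℕ, Ioi (-(n : ℝ))) = univ := by
    ext x; simp only [mem_iUnion, mem_Ioi, mem_univ, iff_true]
    obtain ⟨n, hn⟩ := exists_nat_gt (-x); exact ⟨n, by linarith⟩
  rw [h2, measure_univ] at h1
  have := (ENNReal.tendsto_toReal (by simp)).comp h1
  simpa [Function.comp_def, Gf] using this

lemma Gf_tendsto_right (s : ℝ) :
    Tendsto (fun n : ℕ => Gf ν (s + ((n : ℝ) + 1)⁻¹)) atTop (𝓝 (Gf ν s)) := by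
  have h1 : Tendsto (fun n : ℕ => ν (Ioi (s + ((n : ℝ) + 1)⁻¹))) atTop
      (𝓝 (ν (⋃ n : ℕ, Ioi (s + ((n : ℝ) + 1)⁻¹)))) := by
    apply tendsto_measure_iUnion_atTop
    intro n m h
    apply Ioi_subset_Ioi
    have : ((m : ℝ) + 1)⁻¹ ≤ ((n : ℝ) + 1)⁻¹ := by
      have hnm : (n:ℝ) ≤ (m:ℝ) := Nat.cast_le.mpr h
      exact inv_anti₀ (by positivity) (by linarith)
    linarith
  have h2 : (⋃ n : ℕ, Ioi (s + ((n : ℝ) + 1)⁻¹)) = Ioi s := by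
    ext x
    simp only [mem_iUnion, mem_Ioi]
    constructor
    · rintro ⟨n, hn⟩; have : (0:ℝ) < ((n:ℝ)+1)⁻¹ := by positivity
      linarith
    · intro hx
      obtain ⟨n, hn⟩ := exists_nat_one_div_lt (show (0:ℝ) < x - s by linarith)
      refine ⟨n, ?_⟩
      rw [one_div] at hn
      linarith
  rw [h2] at h1
  have := (ENNReal.tendsto_toReal (measure_ne_top ν _)).comp h1
  simpa [Gf, Function.comp_def] using this

lemma Gf_tendsto_left (hatom : ∀ x : ℝ, ν {x} = 0) (s : ℝ) :
    Tendsto (fun n : ℕ => Gf ν (s - ((n : ℝ) + 1)⁻¹)) atTop (𝓝 (Gf ν s)) := by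
  have h1 : Tendsto (fun n : ℕ => ν (Ioi (s - ((n : ℝ) + 1)⁻¹))) atTop
      (𝓝 (ν (⋂ n : ℕ, Ioi (s - ((n : ℝ) + 1)⁻¹)))) := by
    apply tendsto_measure_iInter_atTop (fun n => measurableSet_Ioi.nullMeasurableSet)
    · intro n m h
      apply Ioi_subset_Ioi
      have : ((m : ℝ) + 1)⁻¹ ≤ ((n : ℝ) + 1)⁻¹ := by
        have hnm : (n:ℝ) ≤ (m:ℝ) := Nat.cast_le.mpr h
        exact inv_anti₀ (by positivity) (by linarith)
      linarith
    · exact ⟨0, measure_ne_top _ _⟩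
  have h2 : (⋂ n : ℕ, Ioi (s - ((n : ℝ) + 1)⁻¹)) = Ici s := by
    ext x
    simp only [mem_iInter, mem_Ioi, mem_Ici]
    constructor
    · intro h
      by_contra hx
      push_neg at hx
      obtain ⟨n, hn⟩ := exists_nat_one_div_lt (show (0:ℝ) < s - x by linarith)
      rw [one_div] at hn
      have := h n
      linarith
    · intro hx n
      have : (0:ℝ) < ((n:ℝ)+1)⁻¹ := by positivity
      linarith
  have h3 : ν (Ici s) = ν (Ioi s) := (measure_congr (Ioi_ae_eq_Ici' (hatom s))).symm
  rw [h2, h3] at h1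
  have := (ENNReal.tendsto_toReal (measure_ne_top ν _)).comp h1
  simpa [Gf, Function.comp_def] using this

end Aux
section Core

variable {ν : Measure ℝ} [IsProbabilityMeasure ν]

lemma Gf_core (hatom : ∀ x : ℝ, ν {x} = 0) (u : ℝ)
    (hne : {t | Gf ν t < u}.Nonempty) (hbdd : BddBelow {t | Gf ν t < u}) :
    (ν {t | Gf ν t < u}).toReal = u := by
  set E := {t | Gf ν t < u} with hE
  set s := sInf E with hs
  have hup : ∀ a ∈ E, ∀ b, a ≤ b → b ∈ E := fun a ha b hab =>
    lt_of_le_of_lt (Gf_anti hab) ha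
  have hIoi : Ioi s ⊆ E := by
    intro t ht
    obtain ⟨e, heE, he⟩ := exists_lt_of_csInf_lt hne ht
    exact hup e heE t he.le
  have hIci : E ⊆ Ici s := fun t ht => csInf_le hbdd ht
  have hνIci : ν (Ici s) = ν (Ioi s) := (measure_congr (Ioi_ae_eq_Ici' (hatom s))).symm
  have hνE : ν E = ν (Ioi s) := le_antisymm
    (le_trans (measure_mono hIci) hνIci.le) (measure_mono hIoi)
  have hGs_le : Gf ν s ≤ u := by
    refine le_of_tendsto (Gf_tendsto_right s) (Eventually.of_forall fun n => ?_)
    have hpos : (0:ℝ) < ((n : ℝ) + 1)⁻¹ := by positivity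
    have : s + ((n : ℝ) + 1)⁻¹ ∈ E := hIoi (by simp only [mem_Ioi]; linarith)
    exact le_of_lt this
  have hGs_ge : u ≤ Gf ν s := by
    refine ge_of_tendsto (Gf_tendsto_left hatom s) (Eventually.of_forall fun n => ?_)
    have hn : s - ((n : ℝ) + 1)⁻¹ ∉ E := by
      intro hmem
      have := csInf_le hbdd hmem
      have hpos : (0:ℝ) < ((n : ℝ) + 1)⁻¹ := by positivity
      rw [← hs] at this
      linarith
    simpa [hE, not_lt] using hn
  rw [hνE]
  exact le_antisymm hGs_le hGs_ge

lemma Gf_lt_meas (u : ℝ) : MeasurableSet {t | Gf ν t < u} :=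
  Gf_meas measurableSet_Iio

lemma Gf_Mkey (hatom : ∀ x : ℝ, ν {x} = 0) (u : ℝ) (h0 : 0 ≤ u) (h1 : u ≤ 1) :
    (ν {t | Gf ν t < u}).toReal = u := by
  set E := {t | Gf ν t < u} with hE
  rcases E.eq_empty_or_nonempty with hemp | hne
  · have hle : u ≤ 0 := by
      refine ge_of_tendsto (Gf_tendsto_atTop (ν := ν)) (Eventually.of_forall fun n => ?_)
      have : (n : ℝ) ∉ E := by rw [hemp]; exact notMem_empty _
      simpa [hE, not_lt] using this
    rw [hemp, measure_empty]
    simp [le_antisymm hle h0]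
  · by_cases hbdd : BddBelow E
    · exact Gf_core hatom u hne hbdd
    · have hall : ∀ t, t ∈ E := by
        intro t
        rw [not_bddBelow_iff] at hbdd
        obtain ⟨e, heE, he⟩ := hbdd t
        exact lt_of_le_of_lt (Gf_anti he.le) heE
      have hge : 1 ≤ u := by
        refine le_of_tendsto (Gf_tendsto_atBot (ν := ν)) (Eventually.of_forall fun n => ?_)
        exact le_of_lt (hall _)
      have hEuniv : E = univ := eq_univ_of_forall hall
      rw [hEuniv, measure_univ]
      simp [le_antisymm h1 hge]

lemma Gf_level_null (hatom : ∀ x : ℝ, ν {x} = 0) (θ : ℝ) :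
    ν {t | θ < t ∧ Gf ν t = Gf ν θ} = 0 := by
  set E := {t | Gf ν t < Gf ν θ} with hE
  have hEsub : E ⊆ Ioi θ := by
    intro t ht
    rw [mem_Ioi]
    by_contra h
    push_neg at h
    exact absurd (Gf_anti h) (not_le_of_gt ht)
  have hset : {t | θ < t ∧ Gf ν t = Gf ν θ} = Ioi θ \ E := by
    ext t
    simp only [mem_setOf_eq, mem_diff, mem_Ioi, hE]
    constructor
    · rintro ⟨h1, h2⟩; exact ⟨h1, by rw [h2]; exact lt_irrefl _⟩
    · rintro ⟨h1, h2⟩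
      exact ⟨h1, le_antisymm (Gf_anti h1.le) (not_lt.mp h2)⟩
  rcases E.eq_empty_or_nonempty with hemp | hne
  · have hle : Gf ν θ ≤ 0 := by
      refine ge_of_tendsto (Gf_tendsto_atTop (ν := ν)) (Eventually.of_forall fun n => ?_)
      have : (n : ℝ) ∉ E := by rw [hemp]; exact notMem_empty _
      simpa [hE, not_lt] using this
    have hz : Gf ν θ = 0 := le_antisymm hle (Gf_nonneg θ)
    have : ν (Ioi θ) = 0 := by
      have := (ENNReal.toReal_eq_zero_iff _).mp hz
      rcases this with h | h
      · exact h
      · exact absurd h (measure_ne_top _ _)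
    rw [hset]
    exact measure_mono_null diff_subset this
  · have hcore := Gf_core hatom (Gf ν θ) hne ⟨θ, fun e he => (hEsub he).le⟩
    have hνE : ν E = ν (Ioi θ) := by
      have h1 : (ν E).toReal = (ν (Ioi θ)).toReal := hcore
      exact (ENNReal.toReal_eq_toReal_iff' (measure_ne_top _ _) (measure_ne_top _ _)).mp h1
    rw [hset, measure_diff hEsub (Gf_lt_meas _).nullMeasurableSet (measure_ne_top _ _), hνE,
      tsub_self]

end Core
/-- If `X` has an absolutely continuous distribution, `0 ≤ α < β ≤ 1`,
and `Pr(X > θ) ∈ [α, β]`, then `Pr(X > θ | F̄(X) ∈ [α, β)) = (Pr(X > θ) − α)/(β − α)`,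
where `F̄(t) = Pr(X > t)` and the conditional probability is the ratio of joint over
marginal probabilities. -/
theorem pdp_ccdf_conditional_identity_interior
    {Ω : Type*} [MeasurableSpace Ω] (μ : Measure Ω) [IsProbabilityMeasure μ]
    (X : Ω → ℝ) (hX : Measurable X)
    (habs : Measure.map X μ ≪ (volume : Measure ℝ))
    (α β : ℝ) (hα : 0 ≤ α) (hαβ : α < β) (hβ : β ≤ 1)
    (Fbar : ℝ → ℝ) (hF : ∀ t, Fbar t = (μ {ω | t < X ω}).toReal)
    (θ : ℝ) (hθ : Fbar θ ∈ Icc α β) :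
    (μ {ω | θ < X ω ∧ Fbar (X ω) ∈ Ico α β}).toReal /
      (μ {ω | Fbar (X ω) ∈ Ico α β}).toReal
      = (Fbar θ - α) / (β - α) := by
  haveI hprob : IsProbabilityMeasure (Measure.map X μ) :=
    Measure.isProbabilityMeasure_map hX.aemeasurable
  set ν := Measure.map X μ with hν
  have hatom : ∀ x : ℝ, ν {x} = 0 := fun x => habs Real.volume_singleton
  have hFG : Fbar = Gf ν := by
    funext t
    rw [hF, Gf, hν, Measure.map_apply hX measurableSet_Ioi]
    rfl
  rw [hFG] at hθ ⊢
  have hθ1 : α ≤ Gf ν θ := hθ.1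
  have hθ2 : Gf ν θ ≤ β := hθ.2
  set Eα := {t : ℝ | Gf ν t < α} with hEα
  set Eβ := {t : ℝ | Gf ν t < β} with hEβ
  set T := {t : ℝ | θ < t ∧ Gf ν t ∈ Ico α β} with hT
  set D := {t : ℝ | Gf ν t ∈ Ico α β} with hD
  -- translate μ-sets to ν-sets
  have hTmeas : MeasurableSet T :=
    measurableSet_Ioi.inter (Gf_meas measurableSet_Ico)
  have hDmeas : MeasurableSet D := Gf_meas measurableSet_Ico
  have hmapT : μ {ω | θ < X ω ∧ Gf ν (X ω) ∈ Ico α β} = ν T := by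
    rw [hν, Measure.map_apply hX hTmeas]; rfl
  have hmapD : μ {ω | Gf ν (X ω) ∈ Ico α β} = ν D := by
    rw [hν, Measure.map_apply hX hDmeas]; rfl
  rw [hmapT, hmapD]
  -- denominator
  have hEsub : Eα ⊆ Eβ := fun t ht => lt_trans ht hαβ
  have hDset : D = Eβ \ Eα := by
    ext t
    simp only [hD, hEβ, hEα, mem_setOf_eq, mem_diff, mem_Ico, not_lt]
    exact ⟨fun h => ⟨h.2, h.1⟩, fun h => ⟨h.2, h.1⟩⟩
  have hMα : (ν Eα).toReal = α := Gf_Mkey hatom α hα (le_trans hαβ.le hβ)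
  have hMβ : (ν Eβ).toReal = β := Gf_Mkey hatom β (le_trans hα hαβ.le) hβ
  have hDen : (ν D).toReal = β - α := by
    rw [hDset, measure_diff hEsub (Gf_lt_meas α).nullMeasurableSet (measure_ne_top _ _),
      ENNReal.toReal_sub_of_le (measure_mono hEsub) (measure_ne_top _ _), hMα, hMβ]
  -- numerator
  have hEαsub : Eα ⊆ Ioi θ := by
    intro t ht
    rw [mem_Ioi]
    by_contra h
    push_neg at h
    have h2 : Gf ν θ ≤ Gf ν t := Gf_anti h
    have h3 : Gf ν t < α := ht
    linarith
  have hTsub : T ⊆ Ioi θ \ Eα := by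
    rintro t ⟨h1, h2, h3⟩
    exact ⟨h1, not_lt.mpr h2⟩
  have hsub2 : Ioi θ \ Eα ⊆ T ∪ {t | θ < t ∧ Gf ν t = Gf ν θ} := by
    rintro t ⟨ht1, ht2⟩
    have ht1' : θ < t := ht1
    by_cases hb : Gf ν t < β
    · exact Or.inl ⟨ht1', not_lt.mp ht2, hb⟩
    · exact Or.inr ⟨ht1', le_antisymm (Gf_anti ht1'.le) (le_trans hθ2 (not_lt.mp hb))⟩
  have hνT : ν T = ν (Ioi θ \ Eα) := by
    refine le_antisymm (measure_mono hTsub) ?_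
    calc ν (Ioi θ \ Eα) ≤ ν (T ∪ {t | θ < t ∧ Gf ν t = Gf ν θ}) := measure_mono hsub2
      _ ≤ ν T + ν {t | θ < t ∧ Gf ν t = Gf ν θ} := measure_union_le _ _
      _ = ν T := by rw [Gf_level_null hatom θ, add_zero]
  have hNum : (ν T).toReal = Gf ν θ - α := by
    rw [hνT, measure_diff hEαsub (Gf_lt_meas α).nullMeasurableSet (measure_ne_top _ _),
      ENNReal.toReal_sub_of_le (measure_mono hEαsub) (measure_ne_top _ _), hMα]
    rfl
  rw [hNum, hDen]
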